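/- Let L, μ, c, α, ε, σ > 0, C, P ≥ 0, η := μL/(μ+L), and set q := η²/(L(η + 2L)). Assume αε ≤ 2/(μ+L), ε ≤ min{1/(2c), α, ηα/(4σ²)}, (3/c)L²α² + 16εσ² ≤ qc/4, and let R > 0 satisfy R ≥ 8σ²P/η and R ≥ (4/(qc))[(3L²α²/c)C² + 8εσ²P]. Let (A_k)_{k≥0} and (B_k)_{k≥0} be nonnegative real sequences with A_0 ≤ R and B_0 ≤ qR satisfying, for all k ≥ 0: A_{k+1} ≤ (1 − 3ηαε/2)A_k + Lαε(1/4 + L/(2η))B_k + 2ε²σ²(A_k + B_k + P), and B_{k+1} ≤ (1 − cε/2)B_k + (3L²α²ε/c)(A_k + C²) + 8ε²σ²(A_k + B_k + P). If moreover μ ≤ L (so that q ≤ 1/2), then A_k ≤ R and B_k ≤ qR for all k ≥ 0. -/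

import Mathlib

private lemma aux_amgm (μ L : ℝ) : 4 * (μ * L) ≤ (μ + L) * (μ + L) := by
  nlinarith [sq_nonneg (μ - L)]

private lemma aux_qhalf (η L q : ℝ) (hL : 0 < L) (hη0 : 0 < η) (hηL : η ≤ L)
    (hqid : q * (L * (η + 2 * L)) = η ^ 2) : q ≤ 1 / 2 := by
  nlinarith [mul_pos hL (by linarith : (0:ℝ) < η + 2 * L),
    mul_le_mul_of_nonneg_left hηL hη0.le, mul_le_mul_of_nonneg_left hηL hL.le]

private lemma aux_c2 (η L q : ℝ) (hη0 : 0 < η)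
    (hqid : q * (L * (η + 2 * L)) = η ^ 2) :
    L * (1 / 4 + L / (2 * η)) * q = η / 4 := by
  have hηne : η ≠ 0 := hη0.ne'
  have h1 : L * (1 / 4 + L / (2 * η)) * q = q * (L * (η + 2 * L)) / (4 * η) := by
    field_simp; ring
  rw [h1, hqid]
  field_simp

private lemma auxA (η α ε σ2 q R P : ℝ) (hη : 0 < η) (hα : 0 < α) (hε : 0 < ε)
    (hσ2 : 0 ≤ σ2) (hR : 0 ≤ R) (hP : 0 ≤ P) (hq : 0 ≤ q) (hqh : q ≤ 1 / 2)
    (hεσ : ε * σ2 ≤ η * α / 4) (hPR : 8 * σ2 * P ≤ η * R) (hεα : ε ≤ α) :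
    (1 - 3 * η * α * ε / 2) * R + η * α * ε / 4 * R
      + 2 * ε ^ 2 * σ2 * (R + q * R + P) ≤ R := by
  have h1 : 2 * ε * R * (ε * σ2) ≤ 2 * ε * R * (η * α / 4) :=
    mul_le_mul_of_nonneg_left hεσ (by positivity)
  have h2 : 2 * ε ^ 2 * σ2 * R * q ≤ 2 * ε ^ 2 * σ2 * R * (1 / 2) :=
    mul_le_mul_of_nonneg_left hqh (by positivity)
  have h2b : ε * R * (ε * σ2) ≤ ε * R * (η * α / 4) :=
    mul_le_mul_of_nonneg_left hεσ (by positivity)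
  have h3 : ε ^ 2 / 4 * (8 * σ2 * P) ≤ ε ^ 2 / 4 * (η * R) :=
    mul_le_mul_of_nonneg_left hPR (by positivity)
  have h4 : ε * η * R / 4 * ε ≤ ε * η * R / 4 * α :=
    mul_le_mul_of_nonneg_left hεα (by positivity)
  have h5 : 0 ≤ η * α * ε * R := by positivity
  nlinarith [h1, h2, h2b, h3, h4, h5]

private lemma auxB (D ε σ2 q c R P C2 : ℝ) (hD : 0 ≤ D) (hε : 0 < ε)
    (hσ2 : 0 ≤ σ2) (hR : 0 ≤ R) (hP : 0 ≤ P) (hC2 : 0 ≤ C2) (hq : 0 ≤ q)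
    (hqh : q ≤ 1 / 2) (hsmall : D + 16 * ε * σ2 ≤ q * c / 4)
    (hX : D * C2 + 8 * ε * σ2 * P ≤ q * c * R / 4) :
    (1 - c * ε / 2) * (q * R) + D * ε * (R + C2)
      + 8 * ε ^ 2 * σ2 * (R + q * R + P) ≤ q * R := by
  have h1 : (D + 16 * ε * σ2) * (ε * R) ≤ q * c / 4 * (ε * R) :=
    mul_le_mul_of_nonneg_right hsmall (by positivity)
  have h2 : (D * C2 + 8 * ε * σ2 * P) * ε ≤ q * c * R / 4 * ε :=
    mul_le_mul_of_nonneg_right hX hε.le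
  have h3 : 8 * ε ^ 2 * σ2 * R * q ≤ 8 * ε ^ 2 * σ2 * R * (1 / 2) :=
    mul_le_mul_of_nonneg_left hqh (by positivity)
  have h4 : 0 ≤ ε ^ 2 * σ2 * R := by positivity
  nlinarith [h1, h2, h3, h4]

set_option maxHeartbeats 1000000 in
/-- Sequence-level (induction) form of Theorem 1 (lem1-8) of the paper,
quantization of type 2: uniform boundedness of the QDGD iterates. -/
theorem stmt14 (L μ c α ε σ : ℝ) (C P : ℝ)
    (hL : 0 < L) (hμ : 0 < μ) (hc : 0 < c) (hα : 0 < α) (hε : 0 < ε)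
    (hσ : 0 < σ) (hC : 0 ≤ C) (hP : 0 ≤ P)
    (η q : ℝ) (hη : η = μ * L / (μ + L)) (hq : q = η ^ 2 / (L * (η + 2 * L)))
    (hαε : α * ε ≤ 2 / (μ + L)) (hεc : ε ≤ 1 / (2 * c)) (hεα : ε ≤ α)
    (hεσ : ε ≤ η * α / (4 * σ ^ 2))
    (hsmall : 3 / c * L ^ 2 * α ^ 2 + 16 * ε * σ ^ 2 ≤ q * c / 4)
    (R : ℝ) (hR : 0 < R) (hR1 : 8 * σ ^ 2 * P / η ≤ R)
    (hR2 : 4 / (q * c) * (3 * L ^ 2 * α ^ 2 / c * C ^ 2 + 8 * ε * σ ^ 2 * P) ≤ R)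
    (A B : ℕ → ℝ) (hA0 : ∀ k, 0 ≤ A k) (hB0 : ∀ k, 0 ≤ B k)
    (hA0R : A 0 ≤ R) (hB0R : B 0 ≤ q * R)
    (hrecA : ∀ k, A (k + 1) ≤ (1 - 3 * η * α * ε / 2) * A k
      + L * α * ε * (1 / 4 + L / (2 * η)) * B k
      + 2 * ε ^ 2 * σ ^ 2 * (A k + B k + P))
    (hrecB : ∀ k, B (k + 1) ≤ (1 - c * ε / 2) * B k
      + 3 * L ^ 2 * α ^ 2 * ε / c * (A k + C ^ 2)
      + 8 * ε ^ 2 * σ ^ 2 * (A k + B k + P))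
    (hμL : μ ≤ L) :
    ∀ k, A k ≤ R ∧ B k ≤ q * R := by
  have hs : (0:ℝ) < μ + L := by linarith
  have hη0 : 0 < η := by rw [hη]; positivity
  have hηL : η ≤ L := by
    rw [hη, div_le_iff₀ hs]; linarith [mul_pos hL hL]
  have hq0 : 0 < q := by rw [hq]; positivity
  have hqid : q * (L * (η + 2 * L)) = η ^ 2 := by
    rw [hq]; field_simp
  have hqhalf : q ≤ 1 / 2 := aux_qhalf η L q hL hη0 hηL hqid
  have hαε' : α * ε * (μ + L) ≤ 2 := (le_div_iff₀ hs).mp hαε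
  have hηs : 2 * η ≤ (μ + L) / 2 := by
    rw [hη, show (2:ℝ) * (μ * L / (μ + L)) = 2 * (μ * L) / (μ + L) from by ring,
      div_le_div_iff₀ hs two_pos]
    linarith [aux_amgm μ L]
  have hηαε : η * α * ε ≤ 1 / 2 := by
    have h1 : η * α * ε * (μ + L) ≤ 2 * η := by
      have := mul_le_mul_of_nonneg_left hαε' hη0.le
      linarith [this]
    have h2 : η * α * ε * (μ + L) ≤ 1 / 2 * (μ + L) := by linarith
    exact le_of_mul_le_mul_right (by linarith) hs
  have hηαε0 : 0 ≤ η * α * ε := by positivity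
  have hεσ' : ε * σ ^ 2 ≤ η * α / 4 := by
    have h4 : (0:ℝ) < 4 * σ ^ 2 := by positivity
    have := (le_div_iff₀ h4).mp hεσ
    linarith
  have hPR : 8 * σ ^ 2 * P ≤ η * R := by
    rw [div_le_iff₀ hη0] at hR1; linarith
  have hc2 : L * (1 / 4 + L / (2 * η)) * q = η / 4 := aux_c2 η L q hη0 hqid
  have hqc : (0:ℝ) < q * c := mul_pos hq0 hc
  have hX : 3 * L ^ 2 * α ^ 2 / c * C ^ 2 + 8 * ε * σ ^ 2 * P ≤ q * c * R / 4 := by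
    rw [div_mul_eq_mul_div, div_le_iff₀ hqc] at hR2
    linarith
  have hcε : c * ε ≤ 1 / 2 := by
    rw [le_div_iff₀ (by positivity : (0:ℝ) < 2 * c)] at hεc; linarith
  intro k
  induction k with
  | zero => exact ⟨hA0R, hB0R⟩
  | succ k ih =>
    obtain ⟨hAk, hBk⟩ := ih
    have hAk0 := hA0 k
    have hBk0 := hB0 k
    constructor
    · have h := hrecA k
      have c1 : (1 - 3 * η * α * ε / 2) * A k ≤ (1 - 3 * η * α * ε / 2) * R :=
        mul_le_mul_of_nonneg_left hAk (by linarith)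
      have c2nn : 0 ≤ L * α * ε * (1 / 4 + L / (2 * η)) := by positivity
      have c2 : L * α * ε * (1 / 4 + L / (2 * η)) * B k ≤
          L * α * ε * (1 / 4 + L / (2 * η)) * (q * R) :=
        mul_le_mul_of_nonneg_left hBk c2nn
      have c2' : L * α * ε * (1 / 4 + L / (2 * η)) * (q * R) = η * α * ε / 4 * R := by
        have e : L * α * ε * (1 / 4 + L / (2 * η)) * (q * R)
            = (L * (1 / 4 + L / (2 * η)) * q) * (α * ε * R) := by ring
        rw [e, hc2]; ring
      have c3 : 2 * ε ^ 2 * σ ^ 2 * (A k + B k + P) ≤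
          2 * ε ^ 2 * σ ^ 2 * (R + q * R + P) :=
        mul_le_mul_of_nonneg_left (by linarith) (by positivity)
      have hfin := auxA η α ε (σ ^ 2) q R P hη0 hα hε (by positivity) hR.le hP
        hq0.le hqhalf hεσ' hPR hεα
      linarith [c2' ▸ c2]
    · have h := hrecB k
      have c1 : (1 - c * ε / 2) * B k ≤ (1 - c * ε / 2) * (q * R) :=
        mul_le_mul_of_nonneg_left hBk (by linarith)
      have c2 : 3 * L ^ 2 * α ^ 2 * ε / c * (A k + C ^ 2) ≤
          3 * L ^ 2 * α ^ 2 * ε / c * (R + C ^ 2) :=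
        mul_le_mul_of_nonneg_left (by linarith) (by positivity)
      have c3 : 8 * ε ^ 2 * σ ^ 2 * (A k + B k + P) ≤
          8 * ε ^ 2 * σ ^ 2 * (R + q * R + P) :=
        mul_le_mul_of_nonneg_left (by linarith) (by positivity)
      have hfin := auxB (3 * L ^ 2 * α ^ 2 / c) ε (σ ^ 2) q c R P (C ^ 2)
        (by positivity) hε (by positivity) hR.le hP (by positivity) hq0.le hqhalf
        (by rw [show 3 * L ^ 2 * α ^ 2 / c = 3 / c * L ^ 2 * α ^ 2 from by ring]; exact hsmall) hX
      have e1 : 3 * L ^ 2 * α ^ 2 * ε / c * (R + C ^ 2)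
          = 3 * L ^ 2 * α ^ 2 / c * ε * (R + C ^ 2) := by ring
      linarith [e1 ▸ c2]
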